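/- σ²(c) = 1222685807050467558645782547163492 / 4561296506512477081905890170847375, where c = 277/665. -/

import Mathlib

open scoped BigOperators

/-- `V x ξ = min x ξ - x * ξ`. -/
noncomputable def V (x ξ : ℝ) : ℝ := min x ξ - x * ξ

/-- `σ²(x) = V(⟨x⟩, ⟨x⟩) + 2 ∑_{k=1}^∞ 6^{-k} V(⟨2^k x⟩, ⟨3^k x⟩)`. -/
noncomputable def sigmaSq (x : ℝ) : ℝ :=
  V (Int.fract x) (Int.fract x) +
    2 * ∑' k : ℕ, (1 / 6 ^ (k + 1) : ℝ) *
      V (Int.fract ((2 : ℝ) ^ (k + 1) * x)) (Int.fract ((3 : ℝ) ^ (k + 1) * x))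

/-- `c = 277/665 = 277/(3^6 - 2^6)`. -/
noncomputable def c : ℝ := 277 / 665

noncomputable def g (k : ℕ) : ℝ :=
  (1 / 6 ^ (k + 1) : ℝ) *
    V (Int.fract ((2 : ℝ) ^ (k + 1) * c)) (Int.fract ((3 : ℝ) ^ (k + 1) * c))

lemma fract2 (m : ℕ) : Int.fract ((2 : ℝ) ^ m * c) = ((2 ^ m * 277 % 665 : ℕ) : ℝ) / 665 := by
  have h : (2 : ℝ) ^ m * c = ((2 ^ m * 277 : ℕ) : ℝ) / ((665 : ℕ) : ℝ) := by
    unfold c; push_cast; ring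
  rw [h, Int.fract_div_natCast_eq_div_natCast_mod]
  norm_num

lemma fract3 (m : ℕ) : Int.fract ((3 : ℝ) ^ m * c) = ((3 ^ m * 277 % 665 : ℕ) : ℝ) / 665 := by
  have h : (3 : ℝ) ^ m * c = ((3 ^ m * 277 : ℕ) : ℝ) / ((665 : ℕ) : ℝ) := by
    unfold c; push_cast; ring
  rw [h, Int.fract_div_natCast_eq_div_natCast_mod]
  norm_num

lemma V_abs_le (x ξ : ℝ) (hx : x ∈ Set.Ico (0:ℝ) 1) (hξ : ξ ∈ Set.Ico (0:ℝ) 1) :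
    |V x ξ| ≤ 1 := by
  obtain ⟨hx0, hx1⟩ := hx
  obtain ⟨hξ0, hξ1⟩ := hξ
  have h1 : min x ξ ≤ x := min_le_left _ _
  have h2 : (0:ℝ) ≤ min x ξ := le_min hx0 hξ0
  rw [abs_le, V]
  constructor <;> nlinarith

lemma g_summable : Summable g := by
  apply Summable.of_norm_bounded (g := fun k => (1/6 : ℝ) ^ (k + 1)) ?_ ?_
  · exact (summable_geometric_of_lt_one (by norm_num) (by norm_num)).comp_injective
      (add_left_injective 1)
  · intro k
    have hb := V_abs_le (Int.fract ((2 : ℝ) ^ (k+1) * c)) (Int.fract ((3 : ℝ) ^ (k+1) * c))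
      ⟨Int.fract_nonneg _, Int.fract_lt_one _⟩ ⟨Int.fract_nonneg _, Int.fract_lt_one _⟩
    have h6 : (0:ℝ) < 6 ^ (k+1) := by positivity
    rw [g, Real.norm_eq_abs, abs_mul, abs_of_pos (by positivity : (0:ℝ) < 1 / 6 ^ (k+1))]
    calc 1 / 6 ^ (k+1) * |V _ _| ≤ 1 / 6 ^ (k+1) * 1 := by
          apply mul_le_mul_of_nonneg_left hb (by positivity)
      _ = (1/6 : ℝ) ^ (k+1) := by rw [mul_one, one_div, one_div, inv_pow]

lemma g_periodic (k : ℕ) : g (k + 36) = (1 / 6 ^ 36 : ℝ) * g k := by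
  have key2 : (2 : ℝ) ^ 36 * c = c + 28624503843 := by unfold c; norm_num
  have key3 : (3 : ℝ) ^ 36 * c = c + 62520622522208656 := by unfold c; norm_num
  have h2 : Int.fract ((2 : ℝ) ^ (k + 36 + 1) * c) = Int.fract ((2 : ℝ) ^ (k + 1) * c) := by
    have he : (2 : ℝ) ^ (k + 36 + 1) * c
        = 2 ^ (k + 1) * c + ((2 ^ (k + 1) * 28624503843 : ℕ) : ℝ) := by
      push_cast
      calc (2 : ℝ) ^ (k + 36 + 1) * c = 2 ^ (k + 1) * (2 ^ 36 * c) := by ring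
        _ = 2 ^ (k + 1) * c + 2 ^ (k + 1) * 28624503843 := by rw [key2]; ring
    rw [he, Int.fract_add_natCast]
  have h3 : Int.fract ((3 : ℝ) ^ (k + 36 + 1) * c) = Int.fract ((3 : ℝ) ^ (k + 1) * c) := by
    have he : (3 : ℝ) ^ (k + 36 + 1) * c
        = 3 ^ (k + 1) * c + ((3 ^ (k + 1) * 62520622522208656 : ℕ) : ℝ) := by
      push_cast
      calc (3 : ℝ) ^ (k + 36 + 1) * c = 3 ^ (k + 1) * (3 ^ 36 * c) := by ring
        _ = 3 ^ (k + 1) * c + 3 ^ (k + 1) * 62520622522208656 := by rw [key3]; ring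
    rw [he, Int.fract_add_natCast]
  unfold g
  rw [h2, h3]
  have hp : (6 : ℝ) ^ (k + 36 + 1) = 6 ^ 36 * 6 ^ (k + 1) := by
    rw [← pow_add]; ring_nf
  rw [hp]
  have h6 : (6 : ℝ) ^ 36 ≠ 0 := by positivity
  have h6' : (6 : ℝ) ^ (k + 1) ≠ 0 := by positivity
  field_simp

lemma S_val : ∑ i ∈ Finset.range 36, g i
    = 14266585925987345035675768816039 / 1140324126628119270476472542822400 := by
  simp only [Finset.sum_range_succ, Finset.sum_range_zero, g, V, fract2, fract3]
  norm_num [min_def]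

theorem sigmaSq_c_value :
    sigmaSq c =
      1222685807050467558645782547163492 / 4561296506512477081905890170847375 := by
  have hsum := g_summable
  have hkey : ∑ i ∈ Finset.range 36, g i + ∑' i, g (i + 36) = ∑' i, g i :=
    hsum.sum_add_tsum_nat_add 36
  have hshift : ∑' i, g (i + 36) = (1 / 6 ^ 36 : ℝ) * ∑' i, g i := by
    simp_rw [g_periodic]
    exact tsum_mul_left
  rw [hshift, S_val] at hkey
  have hT : ∑' i, g i
      = 57066343703949380142703075264156 / 4561296506512477081905890170847375 := by
    have h36 : (6 : ℝ) ^ 36 = 10314424798490535546171949056 := by norm_num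
    rw [h36] at hkey
    linarith
  have hfc : Int.fract c = 277 / 665 := by
    rw [Int.fract_eq_self.2 ⟨by unfold c; norm_num, by unfold c; norm_num⟩]; rfl
  show V (Int.fract c) (Int.fract c) + 2 * ∑' k : ℕ, g k = _
  rw [hT, hfc, V]
  norm_num [min_def]
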